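/- arXiv:0712.3184 — 2 statements merged into one kernel-verified Lean document; each statement's English description precedes it below -/
import Mathlib

section
/- For every integer n ≥ 1 and all points x, y₁, …, y_n ∈ ℝ³ one has the quadratic bound |fl_n(x, y₁, …, y_n)| ≤ (|x − y₁| + |y₁ − y₂| + ⋯ + |y_{n−1} − y_n|)², where |·| is the Euclidean norm on ℝ³. -/
noncomputable section

/-- The magnetic phase `φ(x,x') = (x₂x₁' − x₁x₂')/2`. -/
def phi (x x' : EuclideanSpace ℝ (Fin 3)) : ℝ := (x 1 * x' 0 - x 0 * x' 1) / 2

/-- `fl_n(x,y₁,…,y_n) = φ(x,y₁) + φ(y₁,y₂) + ⋯ + φ(y_{n−1},y_n) + φ(y_n,x)`,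
where the points `y₁,…,y_n` are the values `y 1, …, y n`. -/
def fln (n : ℕ) (x : EuclideanSpace ℝ (Fin 3)) (y : ℕ → EuclideanSpace ℝ (Fin 3)) : ℝ :=
  phi x (y 1) + (∑ k ∈ Finset.Ico 1 n, phi (y k) (y (k + 1))) + phi (y n) x

lemma coord_abs_le_norm (a : EuclideanSpace ℝ (Fin 3)) (i : Fin 3) : |a i| ≤ ‖a‖ := by
  rw [EuclideanSpace.norm_eq]
  have h1 : |a i| = Real.sqrt (‖a i‖ ^ 2) := by
    rw [Real.sqrt_sq_eq_abs]; simp [Real.norm_eq_abs]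
  rw [h1]
  apply Real.sqrt_le_sqrt
  exact Finset.single_le_sum (f := fun j => ‖a j‖ ^ 2)
    (fun j _ => by positivity) (Finset.mem_univ i)

lemma phi_abs_le (a b : EuclideanSpace ℝ (Fin 3)) : |phi a b| ≤ ‖a‖ * ‖b‖ := by
  have h1 := coord_abs_le_norm a 1
  have h0 := coord_abs_le_norm a 0
  have g1 := coord_abs_le_norm b 1
  have g0 := coord_abs_le_norm b 0
  have ha0 := abs_nonneg (a 0)
  have ha1 := abs_nonneg (a 1)
  have hb0 := abs_nonneg (b 0)
  have hb1 := abs_nonneg (b 1)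
  calc |phi a b| ≤ (|a 1| * |b 0| + |a 0| * |b 1|) / 2 := by
        unfold phi
        rw [abs_div]
        simp only [abs_two]
        gcongr
        calc |a 1 * b 0 - a 0 * b 1| ≤ |a 1 * b 0| + |a 0 * b 1| := abs_sub _ _
          _ = |a 1| * |b 0| + |a 0| * |b 1| := by rw [abs_mul, abs_mul]
    _ ≤ (‖a‖ * ‖b‖ + ‖a‖ * ‖b‖) / 2 := by gcongr
    _ = ‖a‖ * ‖b‖ := by ring

lemma fln_succ (n : ℕ) (hn : 1 ≤ n) (x : EuclideanSpace ℝ (Fin 3))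
    (y : ℕ → EuclideanSpace ℝ (Fin 3)) :
    fln (n + 1) x y = fln n x y + phi (y n - x) (y (n + 1) - y n) := by
  unfold fln
  rw [Finset.sum_Ico_succ_top hn]
  simp only [phi, PiLp.sub_apply]
  ring

lemma fln_bound (x : EuclideanSpace ℝ (Fin 3)) (y : ℕ → EuclideanSpace ℝ (Fin 3)) :
    ∀ n, 1 ≤ n → |fln n x y| ≤ ∑ k ∈ Finset.Ico 1 n, ‖y k - x‖ * ‖y k - y (k + 1)‖ := by
  intro n hn
  induction n, hn using Nat.le_induction with
  | base =>
    simp only [fln, Finset.Ico_self, Finset.sum_empty]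
    have : phi x (y 1) + 0 + phi (y 1) x = 0 := by simp only [phi]; ring
    rw [this, abs_zero]
  | succ n hn ih =>
    rw [fln_succ n hn, Finset.sum_Ico_succ_top hn]
    calc |fln n x y + phi (y n - x) (y (n + 1) - y n)|
        ≤ |fln n x y| + |phi (y n - x) (y (n + 1) - y n)| := abs_add_le _ _
      _ ≤ (∑ k ∈ Finset.Ico 1 n, ‖y k - x‖ * ‖y k - y (k + 1)‖)
          + ‖y n - x‖ * ‖y n - y (n + 1)‖ := by
        gcongr
        calc |phi (y n - x) (y (n + 1) - y n)| ≤ ‖y n - x‖ * ‖y (n + 1) - y n‖ := phi_abs_le _ _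
          _ = ‖y n - x‖ * ‖y n - y (n + 1)‖ := by rw [norm_sub_rev (y (n + 1))]

lemma dist_bound (x : EuclideanSpace ℝ (Fin 3)) (y : ℕ → EuclideanSpace ℝ (Fin 3)) :
    ∀ k, 1 ≤ k → ‖y k - x‖ ≤ ‖x - y 1‖ + ∑ j ∈ Finset.Ico 1 k, ‖y j - y (j + 1)‖ := by
  intro k hk
  induction k, hk using Nat.le_induction with
  | base => simp [norm_sub_rev]
  | succ k hk ih =>
    rw [Finset.sum_Ico_succ_top hk]
    calc ‖y (k + 1) - x‖ ≤ ‖y (k + 1) - y k‖ + ‖y k - x‖ := norm_sub_le_norm_sub_add_norm_sub _ _ _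
      _ = ‖y k - x‖ + ‖y k - y (k + 1)‖ := by rw [norm_sub_rev (y (k+1))]; ring
      _ ≤ (‖x - y 1‖ + ∑ j ∈ Finset.Ico 1 k, ‖y j - y (j + 1)‖) + ‖y k - y (k + 1)‖ := by
        gcongr
      _ = ‖x - y 1‖ + (∑ j ∈ Finset.Ico 1 k, ‖y j - y (j + 1)‖ + ‖y k - y (k + 1)‖) := by ring

/-- For `n ≥ 1`, `|fl_n(x,y₁,…,y_n)| ≤ (|x−y₁| + |y₁−y₂| + ⋯ + |y_{n−1}−y_n|)²`. -/
theorem fln_quadratic_bound (n : ℕ) (hn : 1 ≤ n) (x : EuclideanSpace ℝ (Fin 3))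
    (y : ℕ → EuclideanSpace ℝ (Fin 3)) :
    |fln n x y| ≤ (‖x - y 1‖ + ∑ k ∈ Finset.Ico 1 n, ‖y k - y (k + 1)‖) ^ 2 := by
  set S : ℝ := ‖x - y 1‖ + ∑ k ∈ Finset.Ico 1 n, ‖y k - y (k + 1)‖ with hS
  have hS0 : 0 ≤ S := by positivity
  have key : ∀ k ∈ Finset.Ico 1 n, ‖y k - x‖ ≤ S := by
    intro k hk
    rw [Finset.mem_Ico] at hk
    calc ‖y k - x‖ ≤ ‖x - y 1‖ + ∑ j ∈ Finset.Ico 1 k, ‖y j - y (j + 1)‖ :=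
          dist_bound x y k hk.1
      _ ≤ S := by
        rw [hS]
        apply add_le_add_right
        exact Finset.sum_le_sum_of_subset_of_nonneg
          (Finset.Ico_subset_Ico le_rfl hk.2.le) fun i _ _ => norm_nonneg _
  calc |fln n x y| ≤ ∑ k ∈ Finset.Ico 1 n, ‖y k - x‖ * ‖y k - y (k + 1)‖ := fln_bound x y n hn
    _ ≤ ∑ k ∈ Finset.Ico 1 n, S * ‖y k - y (k + 1)‖ := by
        apply Finset.sum_le_sum
        intro k hk
        exact mul_le_mul_of_nonneg_right (key k hk) (norm_nonneg _)
    _ = S * ∑ k ∈ Finset.Ico 1 n, ‖y k - y (k + 1)‖ := by rw [Finset.mul_sum]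
    _ ≤ S * S := by
        apply mul_le_mul_of_nonneg_left _ hS0
        rw [hS]
        nlinarith [norm_nonneg (x - y 1)]
    _ = S ^ 2 := (sq S).symm
end
end

section
/- Let σ > 0 be real and ε ∈ {1, −1}. For every ζ in the cut plane D^ε, where D^1 := ℂ \ [1, ∞) and D^{−1} := ℂ \ (−∞, −1], the denominator 1 − ζ ε e^{−t} does not vanish for t > 0 and the integral defining f_σ^ε(ζ) := (ζ/Γ(σ)) ∫₀^∞ t^{σ−1} e^{−t} / (1 − ζ ε e^{−t}) dt converges absolutely; moreover the function ζ ↦ f_σ^ε(ζ) is complex-differentiable (analytic) on D^ε. -/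
open MeasureTheory Real Set

noncomputable section

/-- The cut plane `D^ε`: for `ε = 1` this is `ℂ \ [1,∞)`, and for `ε = −1` it is
`ℂ \ (−∞,−1]`; both are described by the condition `εζ ∉ [1,∞)`. -/
def cutPlane (ε : ℂ) : Set ℂ := {ζ | ¬((ε * ζ).im = 0 ∧ 1 ≤ (ε * ζ).re)}

lemma cutPlane_isOpen (ε : ℂ) : IsOpen (cutPlane ε) := by
  have h1 : IsClosed {z : ℂ | z.im = 0 ∧ 1 ≤ z.re} := by
    have : {z : ℂ | z.im = 0 ∧ 1 ≤ z.re} = {z : ℂ | z.im = 0} ∩ {z : ℂ | 1 ≤ z.re} := rfl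
    rw [this]
    exact (isClosed_eq Complex.continuous_im continuous_const).inter
      (isClosed_le continuous_const Complex.continuous_re)
  have h2 : cutPlane ε = (fun ζ : ℂ => ε * ζ) ⁻¹' {z : ℂ | z.im = 0 ∧ 1 ≤ z.re}ᶜ := rfl
  rw [h2]
  exact h1.isOpen_compl.preimage (continuous_const.mul continuous_id)

lemma cutPlane_nonvanish {ε ζ : ℂ} (hζ : ζ ∈ cutPlane ε) {s : ℝ} (hs0 : 0 ≤ s)
    (hs1 : s ≤ 1) : 1 - ζ * ε * (s : ℂ) ≠ 0 := by
  intro h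
  have hsne : s ≠ 0 := by
    intro h0
    rw [h0] at h; simp at h
  have hspos : 0 < s := lt_of_le_of_ne hs0 (Ne.symm hsne)
  have hsC : (s : ℂ) ≠ 0 := by exact_mod_cast hsne
  have hval : ε * ζ = ((1 / s : ℝ) : ℂ) := by
    push_cast
    rw [eq_div_iff hsC]
    linear_combination -h
  exact hζ ⟨by rw [hval]; exact Complex.ofReal_im _,
    by rw [hval, Complex.ofReal_re]; exact one_le_one_div hspos hs1⟩

lemma cutPlane_delta {ε : ℂ} {K : Set ℂ} (hK : IsCompact K) (hKc : K ⊆ cutPlane ε) :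
    ∃ δ > (0 : ℝ), ∀ ζ ∈ K, ∀ s : ℝ, 0 ≤ s → s ≤ 1 → δ ≤ ‖1 - ζ * ε * (s : ℂ)‖ := by
  rcases K.eq_empty_or_nonempty with hKe | hKe
  · exact ⟨1, one_pos, by simp [hKe]⟩
  · have hcomp : IsCompact (K ×ˢ Icc (0 : ℝ) 1) := hK.prod isCompact_Icc
    have hne : (K ×ˢ Icc (0 : ℝ) 1).Nonempty := hKe.prod ⟨0, by norm_num⟩
    have hcont : ContinuousOn (fun p : ℂ × ℝ => ‖1 - p.1 * ε * (p.2 : ℂ)‖)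
        (K ×ˢ Icc (0 : ℝ) 1) := by
      apply Continuous.continuousOn
      exact (continuous_const.sub ((continuous_fst.mul continuous_const).mul
        (Complex.continuous_ofReal.comp continuous_snd))).norm
    obtain ⟨⟨ζ₀, s₀⟩, hmem, hmin⟩ := hcomp.exists_isMinOn hne hcont
    refine ⟨‖1 - ζ₀ * ε * (s₀ : ℂ)‖, ?_, ?_⟩
    · exact norm_pos_iff.mpr (cutPlane_nonvanish (hKc hmem.1) hmem.2.1 hmem.2.2)
    · intro ζ hζ s h0 h1
      exact isMinOn_iff.mp hmin (ζ, s) (Set.mk_mem_prod hζ ⟨h0, h1⟩)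

/-- For `σ > 0` and `ε ∈ {1,−1}`: on the cut plane `D^ε` the denominator
`1 − ζεe^{−t}` never vanishes for `t > 0`, the integral defining
`f_σ^ε(ζ) = (ζ/Γ(σ)) ∫₀^∞ t^{σ−1}e^{−t}/(1 − ζεe^{−t}) dt` converges absolutely,
and `ζ ↦ f_σ^ε(ζ)` is complex-differentiable (analytic) on `D^ε`. -/
theorem bose_fermi_function_analytic (σ : ℝ) (hσ : 0 < σ) (ε : ℂ)
    (hε : ε = 1 ∨ ε = -1) :
    (∀ ζ ∈ cutPlane ε,
      (∀ t : ℝ, 0 < t → 1 - ζ * ε * ((Real.exp (-t) : ℝ) : ℂ) ≠ 0) ∧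
      IntegrableOn
        (fun t : ℝ => ((t ^ (σ - 1) * Real.exp (-t) : ℝ) : ℂ) /
          (1 - ζ * ε * ((Real.exp (-t) : ℝ) : ℂ))) (Ioi 0)) ∧
    DifferentiableOn ℂ
      (fun ζ : ℂ => ζ / ((Real.Gamma σ : ℝ) : ℂ) *
        ∫ t in Ioi (0 : ℝ), ((t ^ (σ - 1) * Real.exp (-t) : ℝ) : ℂ) /
          (1 - ζ * ε * ((Real.exp (-t) : ℝ) : ℂ)))
      (cutPlane ε) := by
  have hεnorm : ‖ε‖ = 1 := by rcases hε with h | h <;> simp [h]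
  have hexp0 : ∀ t : ℝ, (0 : ℝ) ≤ Real.exp (-t) := fun t => (Real.exp_pos _).le
  have hexp1 : ∀ t : ℝ, 0 ≤ t → Real.exp (-t) ≤ 1 := fun t ht =>
    Real.exp_le_one_iff.mpr (by linarith)
  set g : ℝ → ℝ := fun t => t ^ (σ - 1) * Real.exp (-t) with hg
  have hgnonneg : ∀ t : ℝ, 0 < t → 0 ≤ g t := fun t ht =>
    mul_nonneg (Real.rpow_nonneg ht.le _) (hexp0 t)
  have hgint : IntegrableOn g (Ioi (0 : ℝ)) := by
    have := Real.GammaIntegral_convergent hσ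
    apply this.congr_fun _ measurableSet_Ioi
    intro t _; simp [hg, mul_comm]
  have hden : ∀ ζ ∈ cutPlane ε, ∀ t : ℝ, 0 ≤ t →
      1 - ζ * ε * ((Real.exp (-t) : ℝ) : ℂ) ≠ 0 := fun ζ hζ t ht =>
    cutPlane_nonvanish hζ (hexp0 t) (hexp1 t ht)
  have hmeas : ∀ ζ ∈ cutPlane ε, AEStronglyMeasurable
      (fun t : ℝ => ((g t : ℝ) : ℂ) / (1 - ζ * ε * ((Real.exp (-t) : ℝ) : ℂ)))
      (volume.restrict (Ioi 0)) := by
    intro ζ hζ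
    apply ContinuousOn.aestronglyMeasurable _ measurableSet_Ioi
    apply ContinuousOn.div
    · apply Complex.continuous_ofReal.comp_continuousOn
      exact (ContinuousOn.rpow_const continuousOn_id
        (fun t ht => Or.inl (ne_of_gt ht))).mul
        (Continuous.continuousOn (Real.continuous_exp.comp continuous_neg))
    · apply Continuous.continuousOn
      exact continuous_const.sub (continuous_const.mul
        (Complex.continuous_ofReal.comp (Real.continuous_exp.comp continuous_neg)))
    · intro t ht
      exact hden ζ hζ t (le_of_lt ht)
  set F : ℂ → ℝ → ℂ := fun ζ t =>
    ((t ^ (σ - 1) * Real.exp (-t) : ℝ) : ℂ) / (1 - ζ * ε * ((Real.exp (-t) : ℝ) : ℂ)) with hF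
  have hnormF : ∀ ζ : ℂ, ∀ δ : ℝ, 0 < δ → ∀ t : ℝ, 0 < t →
      δ ≤ ‖1 - ζ * ε * ((Real.exp (-t) : ℝ) : ℂ)‖ → ‖F ζ t‖ ≤ g t / δ := by
    intro ζ δ hδ t ht hδle
    rw [hF]
    simp only [norm_div, Complex.norm_real]
    rw [Real.norm_of_nonneg (hgnonneg t ht)]
    gcongr
  have hint : ∀ ζ ∈ cutPlane ε, IntegrableOn (F ζ) (Ioi 0) := by
    intro ζ hζ
    obtain ⟨δ, hδ, hδle⟩ := cutPlane_delta isCompact_singleton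
      (singleton_subset_iff.mpr hζ)
    apply Integrable.mono' (hgint.div_const δ) (hmeas ζ hζ)
    filter_upwards [ae_restrict_mem measurableSet_Ioi] with t ht
    exact hnormF ζ δ hδ t ht (hδle ζ rfl _ (hexp0 t) (hexp1 t ht.le))
  refine ⟨fun ζ hζ => ⟨fun t ht => hden ζ hζ t ht.le, hint ζ hζ⟩, ?_⟩
  intro ζ₀ hζ₀
  have hopen := cutPlane_isOpen ε
  obtain ⟨r, hr, hball⟩ := Metric.isOpen_iff.mp hopen ζ₀ hζ₀
  have hcb : Metric.closedBall ζ₀ (r / 2) ⊆ cutPlane ε :=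
    (Metric.closedBall_subset_ball (by linarith)).trans hball
  obtain ⟨δ, hδ, hδle⟩ := cutPlane_delta (isCompact_closedBall ζ₀ (r / 2)) hcb
  set F' : ℂ → ℝ → ℂ := fun ζ t =>
    (((t ^ (σ - 1) * Real.exp (-t) : ℝ) : ℂ) * (ε * ((Real.exp (-t) : ℝ) : ℂ))) /
      (1 - ζ * ε * ((Real.exp (-t) : ℝ) : ℂ)) ^ 2 with hF'
  have hFmeas' : ∀ᶠ ζ in nhds ζ₀, AEStronglyMeasurable (F ζ) (volume.restrict (Ioi 0)) := by
    filter_upwards [hopen.mem_nhds hζ₀] with ζ hζ using hmeas ζ hζ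
  have hF'meas : AEStronglyMeasurable (F' ζ₀) (volume.restrict (Ioi 0)) := by
    apply ContinuousOn.aestronglyMeasurable _ measurableSet_Ioi
    apply ContinuousOn.div
    · apply ContinuousOn.mul
      · apply Complex.continuous_ofReal.comp_continuousOn
        exact (ContinuousOn.rpow_const continuousOn_id
          (fun t ht => Or.inl (ne_of_gt ht))).mul
          (Continuous.continuousOn (Real.continuous_exp.comp continuous_neg))
      · apply Continuous.continuousOn
        exact continuous_const.mul
          (Complex.continuous_ofReal.comp (Real.continuous_exp.comp continuous_neg))
    · apply Continuous.continuousOn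
      exact (continuous_const.sub (continuous_const.mul
        (Complex.continuous_ofReal.comp (Real.continuous_exp.comp continuous_neg)))).pow 2
    · intro t ht
      exact pow_ne_zero 2 (hden ζ₀ hζ₀ t ht.le)
  have hbound : ∀ᵐ t ∂(volume.restrict (Ioi (0 : ℝ))), ∀ ζ ∈ Metric.ball ζ₀ (r / 2),
      ‖F' ζ t‖ ≤ g t / δ ^ 2 := by
    filter_upwards [ae_restrict_mem measurableSet_Ioi] with t ht ζ hζ
    have hd : δ ≤ ‖1 - ζ * ε * ((Real.exp (-t) : ℝ) : ℂ)‖ :=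
      hδle ζ (Metric.ball_subset_closedBall hζ) _ (hexp0 t) (hexp1 t ht.le)
    rw [hF']
    simp only [norm_div, norm_mul, norm_pow, Complex.norm_real, hεnorm, one_mul]
    rw [Real.norm_of_nonneg (Real.rpow_nonneg ht.le (σ - 1)),
      Real.norm_of_nonneg (hexp0 t)]
    have h1 : t ^ (σ - 1) * Real.exp (-t) * Real.exp (-t) ≤ g t := by
      show _ ≤ t ^ (σ - 1) * Real.exp (-t)
      exact mul_le_of_le_one_right
        (mul_nonneg (Real.rpow_nonneg ht.le _) (hexp0 t)) (hexp1 t ht.le)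
    exact div_le_div₀ (hgnonneg t ht) h1 (by positivity) (pow_le_pow_left₀ hδ.le hd 2)
  have hdiff : ∀ᵐ t ∂(volume.restrict (Ioi (0 : ℝ))), ∀ ζ ∈ Metric.ball ζ₀ (r / 2),
      HasDerivAt (fun ζ => F ζ t) (F' ζ t) ζ := by
    filter_upwards [ae_restrict_mem measurableSet_Ioi] with t ht ζ hζ
    have hdne : (1 - ζ * ε * ((Real.exp (-t) : ℝ) : ℂ)) ≠ 0 :=
      hden ζ (hcb (Metric.ball_subset_closedBall hζ)) t ht.le
    have h1 : HasDerivAt (fun ζ : ℂ => 1 - ζ * ε * ((Real.exp (-t) : ℝ) : ℂ))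
        (-(1 * ε * ((Real.exp (-t) : ℝ) : ℂ))) ζ :=
      (((hasDerivAt_id ζ).mul_const ε).mul_const _).const_sub 1
    have h2 := (hasDerivAt_const ζ ((t ^ (σ - 1) * Real.exp (-t) : ℝ) : ℂ)).div h1 hdne
    have h3 : F' ζ t = (0 * (1 - ζ * ε * ((Real.exp (-t) : ℝ) : ℂ)) -
        ((t ^ (σ - 1) * Real.exp (-t) : ℝ) : ℂ) * -(1 * ε * ((Real.exp (-t) : ℝ) : ℂ))) /
        (1 - ζ * ε * ((Real.exp (-t) : ℝ) : ℂ)) ^ 2 := by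
      rw [hF']
      ring
    rw [h3]
    exact h2
  have key := hasDerivAt_integral_of_dominated_loc_of_deriv_le (Metric.ball_mem_nhds ζ₀ (half_pos hr)) hFmeas'
    (hint ζ₀ hζ₀) hF'meas hbound (hgint.div_const (δ ^ 2)) hdiff
  have hderiv : HasDerivAt (fun ζ : ℂ => ∫ t in Ioi (0 : ℝ), F ζ t)
      (∫ t in Ioi (0 : ℝ), F' ζ₀ t) ζ₀ := key.2
  have h1 : DifferentiableAt ℂ (fun ζ : ℂ => ζ / ((Real.Gamma σ : ℝ) : ℂ)) ζ₀ :=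
    differentiableAt_id.div_const _
  exact (h1.mul hderiv.differentiableAt).differentiableWithinAt
end
end
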